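/- Let s^1,…,s^k be time series with s^l ∈ ℝ^{m_l}, let n ≥ 1, and let P_1,…,P_k be warping paths where P_l has order m_l×n. Then for every j ∈ {1,…,n}, the denominator ∑_{l=1}^k |{i : (i,j) ∈ V(P_l)}| is at least k (in particular positive), and the value (∑_{l=1}^k ∑_{i : (i,j)∈V(P_l)} s^l_i) / (∑_{l=1}^k |{i : (i,j)∈V(P_l)}|) lies in the interval [lb^imp, ub^imp]. -/
import Mathlib


/-- A warping path of order `m × n`: a finite sequence of pairs of positive
integers starting at `(1,1)`, ending at `(m,n)`, each step increasing the
coordinates by `(1,0)`, `(0,1)` or `(1,1)`. -/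
structure WarpingPath (m n : ℕ) where
  len : ℕ
  len_pos : 0 < len
  pt : ℕ → ℕ × ℕ
  first : pt 0 = (1, 1)
  last : pt (len - 1) = (m, n)
  step : ∀ t, t + 1 < len →
    pt (t + 1) = ((pt t).1 + 1, (pt t).2) ∨
    pt (t + 1) = ((pt t).1, (pt t).2 + 1) ∨
    pt (t + 1) = ((pt t).1 + 1, (pt t).2 + 1)

/-- The set of vertices `V(P)` of a warping path. -/
def WarpingPath.V {m n : ℕ} (P : WarpingPath m n) : Finset (ℕ × ℕ) :=
  (Finset.range P.len).image P.pt

/-- The cost `C_P(s, s') = ∑_{(i,j) ∈ V(P)} (s_i − s'_j)²` of a warping path. -/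
noncomputable def WarpingPath.cost {m n : ℕ} (P : WarpingPath m n) (s s' : ℕ → ℝ) : ℝ :=
  ∑ v ∈ P.V, (s v.1 - s' v.2) ^ 2

/-- The dtw-distance between a time series `s` of length `m` and a time series
`s'` of length `n`: the minimum over all warping paths `P` of order `m × n` of
`√(C_P(s, s'))`. -/
noncomputable def dtw (m n : ℕ) (s s' : ℕ → ℝ) : ℝ :=
  Real.sqrt (sInf {c : ℝ | ∃ P : WarpingPath m n, c = P.cost s s'})

/-- `ubImp k m s` is the improved upper bound `ub^imp`: the maximum, over all
admissible interval tuples `(I_1, …, I_k)` with `I_l = [a_l, b_l] ⊆ [1, m_l]`,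
of `(∑_l ∑_{i ∈ I_l} s^l_i) / (∑_l |I_l|)`. -/
noncomputable def ubImp (k : ℕ) (m : Fin k → ℕ) (s : Fin k → ℕ → ℝ) : ℝ :=
  sSup {r : ℝ | ∃ a b : Fin k → ℕ, (∀ l, 1 ≤ a l ∧ a l ≤ b l ∧ b l ≤ m l) ∧
    r = (∑ l : Fin k, ∑ i ∈ Finset.Icc (a l) (b l), s l i) /
        (∑ l : Fin k, ((Finset.Icc (a l) (b l)).card : ℝ))}

/-- `lbImp k m s` is the improved lower bound `lb^imp`, the analogous minimum. -/
noncomputable def lbImp (k : ℕ) (m : Fin k → ℕ) (s : Fin k → ℕ → ℝ) : ℝ :=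
  sInf {r : ℝ | ∃ a b : Fin k → ℕ, (∀ l, 1 ≤ a l ∧ a l ≤ b l ∧ b l ≤ m l) ∧
    r = (∑ l : Fin k, ∑ i ∈ Finset.Icc (a l) (b l), s l i) /
        (∑ l : Fin k, ((Finset.Icc (a l) (b l)).card : ℝ))}

namespace WarpingPath
variable {m n : ℕ} (P : WarpingPath m n)

lemma step_bound (t : ℕ) (h : t + 1 < P.len) :
    (P.pt t).1 ≤ (P.pt (t+1)).1 ∧ (P.pt (t+1)).1 ≤ (P.pt t).1 + 1 ∧
    (P.pt t).2 ≤ (P.pt (t+1)).2 ∧ (P.pt (t+1)).2 ≤ (P.pt t).2 + 1 := by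
  rcases P.step t h with h2 | h2 | h2 <;> rw [h2] <;> simp

lemma mono (t t' : ℕ) (h : t ≤ t') (h' : t' < P.len) :
    (P.pt t).1 ≤ (P.pt t').1 ∧ (P.pt t).2 ≤ (P.pt t').2 := by
  induction t', h using Nat.le_induction with
  | base => exact ⟨le_rfl, le_rfl⟩
  | succ u hu ih =>
    have h1 : u < P.len := Nat.lt_of_succ_lt h'
    obtain ⟨hf, hg⟩ := ih h1
    obtain ⟨a, b, c, d⟩ := P.step_bound u h'
    exact ⟨le_trans hf a, le_trans hg c⟩

end WarpingPath

/-- Discrete IVT -/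
lemma ivt (h : ℕ → ℕ) (lo hi c : ℕ) (hle : lo ≤ hi)
    (hstep : ∀ t, lo ≤ t → t < hi → h (t+1) ≤ h t + 1)
    (h1 : h lo ≤ c) (h2 : c ≤ h hi) : ∃ t, lo ≤ t ∧ t ≤ hi ∧ h t = c := by
  set S := (Finset.Icc lo hi).filter (fun t => h t ≤ c) with hS
  have hne : S.Nonempty := ⟨lo, by simp [hS, hle, h1]⟩
  set t := S.max' hne with ht
  have htS : t ∈ S := S.max'_mem hne
  simp only [hS, Finset.mem_filter, Finset.mem_Icc] at htS
  obtain ⟨⟨hlo, hhi⟩, hc⟩ := htS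
  refine ⟨t, hlo, hhi, ?_⟩
  by_contra hne'
  have hlt : h t < c := lt_of_le_of_ne hc hne'
  have hthi : t < hi := by
    rcases lt_or_eq_of_le hhi with h' | h'
    · exact h'
    · rw [h'] at hlt; omega
  have : t + 1 ∈ S := by
    simp only [hS, Finset.mem_filter, Finset.mem_Icc]
    exact ⟨⟨by omega, by omega⟩, by have := hstep t hlo hthi; omega⟩
  have := S.le_max' _ this
  omega

lemma col {m n : ℕ} (hm : 1 ≤ m) (hn : 1 ≤ n) (P : WarpingPath m n) (j : ℕ)
    (hj1 : 1 ≤ j) (hj2 : j ≤ n) :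
    ∃ a b : ℕ, 1 ≤ a ∧ a ≤ b ∧ b ≤ m ∧
      P.V.filter (fun v => v.2 = j) = (Finset.Icc a b).image (fun i => (i, j)) := by
  have hlen := P.len_pos
  have hfirst := P.first
  have hlast := P.last
  -- find an index with second coordinate j
  obtain ⟨t, ht0, htlen, htj⟩ := ivt (fun t => (P.pt t).2) 0 (P.len - 1) j (by omega)
    (fun t _ ht => by
      show (P.pt (t+1)).2 ≤ (P.pt t).2 + 1
      have := P.step_bound t (by omega)
      omega)
    (by show (P.pt 0).2 ≤ j; rw [hfirst]; exact hj1)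
    (by show j ≤ (P.pt (P.len - 1)).2; rw [hlast]; exact hj2)
  set T := (Finset.range P.len).filter (fun t => (P.pt t).2 = j) with hT
  have hne : T.Nonempty := ⟨t, by simp [hT, htj]; omega⟩
  set t0 := T.min' hne with ht0def
  set t1 := T.max' hne with ht1def
  have ht0T : t0 ∈ T := T.min'_mem hne
  have ht1T : t1 ∈ T := T.max'_mem hne
  simp only [hT, Finset.mem_filter, Finset.mem_range] at ht0T ht1T
  have h01 : t0 ≤ t1 := T.min'_le t1 (T.max'_mem hne)
  have hTIcc : T = Finset.Icc t0 t1 := by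
    ext u
    simp only [hT, Finset.mem_filter, Finset.mem_range, Finset.mem_Icc]
    constructor
    · intro hu
      exact ⟨T.min'_le u (by simp [hT, hu]), T.le_max' u (by simp [hT, hu])⟩
    · rintro ⟨h0, h1⟩
      have hulen : u < P.len := lt_of_le_of_lt h1 ht1T.1
      have m1 := P.mono t0 u h0 hulen
      have m2 := P.mono u t1 h1 ht1T.1
      refine ⟨hulen, ?_⟩
      omega
  refine ⟨(P.pt t0).1, (P.pt t1).1, ?_, ?_, ?_, ?_⟩
  · have := P.mono 0 t0 (Nat.zero_le _) ht0T.1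
    rw [hfirst] at this
    exact this.1
  · exact (P.mono t0 t1 h01 ht1T.1).1
  · have := P.mono t1 (P.len - 1) (by omega) (by omega)
    rw [hlast] at this
    exact this.1
  · have h1 : P.V.filter (fun v => v.2 = j) = T.image P.pt := by
      rw [hT, WarpingPath.V, Finset.filter_image]
    rw [h1, hTIcc]
    ext v
    simp only [Finset.mem_image, Finset.mem_Icc]
    constructor
    · rintro ⟨u, hu, rfl⟩
      have huT : u ∈ T := by rw [hTIcc]; simp [hu]
      simp only [hT, Finset.mem_filter, Finset.mem_range] at huT
      refine ⟨(P.pt u).1, ⟨(P.mono t0 u hu.1 huT.1).1, (P.mono u t1 hu.2 ht1T.1).1⟩, ?_⟩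
      rw [← huT.2]
    · rintro ⟨i, ⟨hai, hib⟩, rfl⟩
      obtain ⟨u, hu0, hu1, hui⟩ := ivt (fun t => (P.pt t).1) t0 t1 i h01
        (fun u _ hu => by
          show (P.pt (u+1)).1 ≤ (P.pt u).1 + 1
          have := P.step_bound u (lt_of_le_of_lt (by omega) ht1T.1)
          omega) hai hib
      have huT : u ∈ T := by rw [hTIcc]; simp [hu0, hu1]
      simp only [hT, Finset.mem_filter, Finset.mem_range] at huT
      exact ⟨u, ⟨hu0, hu1⟩, by rw [← hui, ← huT.2]⟩


lemma finite_S (k : ℕ) (m : Fin k → ℕ) (s : Fin k → ℕ → ℝ) :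
    {r : ℝ | ∃ a b : Fin k → ℕ, (∀ l, 1 ≤ a l ∧ a l ≤ b l ∧ b l ≤ m l) ∧
      r = (∑ l : Fin k, ∑ i ∈ Finset.Icc (a l) (b l), s l i) /
          (∑ l : Fin k, ((Finset.Icc (a l) (b l)).card : ℝ))}.Finite := by
  have hT : {p : (Fin k → ℕ) × (Fin k → ℕ) | ∀ l, p.1 l ≤ m l ∧ p.2 l ≤ m l}.Finite := by
    apply Set.Finite.subset (Set.Finite.prod
      (Set.Finite.pi (fun l : Fin k => Set.finite_Iic (m l)))
      (Set.Finite.pi (fun l : Fin k => Set.finite_Iic (m l))))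
    rintro ⟨a, b⟩ h
    exact ⟨fun l _ => (h l).1, fun l _ => (h l).2⟩
  apply Set.Finite.subset (hT.image (fun p =>
    (∑ l : Fin k, ∑ i ∈ Finset.Icc (p.1 l) (p.2 l), s l i) /
    (∑ l : Fin k, ((Finset.Icc (p.1 l) (p.2 l)).card : ℝ))))
  rintro r ⟨a, b, hab, rfl⟩
  exact ⟨(a, b), fun l => ⟨le_trans (hab l).2.1 (hab l).2.2, (hab l).2.2⟩, rfl⟩

theorem stmt8 (k : ℕ) (hk : 1 ≤ k) (m : Fin k → ℕ) (hm : ∀ l, 1 ≤ m l)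
    (s : Fin k → ℕ → ℝ) (n : ℕ) (hn : 1 ≤ n)
    (P : ∀ l : Fin k, WarpingPath (m l) n) (j : ℕ) (hj : j ∈ Finset.Icc 1 n) :
    k ≤ ∑ l : Fin k, ((P l).V.filter (fun v => v.2 = j)).card ∧
    lbImp k m s ≤
      (∑ l : Fin k, ∑ v ∈ (P l).V.filter (fun v => v.2 = j), s l v.1) /
      ((∑ l : Fin k, ((P l).V.filter (fun v => v.2 = j)).card : ℕ) : ℝ) ∧
    (∑ l : Fin k, ∑ v ∈ (P l).V.filter (fun v => v.2 = j), s l v.1) /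
      ((∑ l : Fin k, ((P l).V.filter (fun v => v.2 = j)).card : ℕ) : ℝ) ≤ ubImp k m s := by
  simp only [Finset.mem_Icc] at hj
  choose a b ha hab hbm heq using fun l => col (hm l) hn (P l) j hj.1 hj.2
  have hinj : Function.Injective (fun i : ℕ => (i, j)) := fun x y h => by
    simpa using h
  have hcard : ∀ l, ((P l).V.filter (fun v => v.2 = j)).card
      = (Finset.Icc (a l) (b l)).card := by
    intro l; rw [heq l, Finset.card_image_of_injective _ hinj]
  have hsum : ∀ l, (∑ v ∈ (P l).V.filter (fun v => v.2 = j), s l v.1)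
      = ∑ i ∈ Finset.Icc (a l) (b l), s l i := by
    intro l
    rw [heq l, Finset.sum_image (fun x _ y _ h => hinj h)]
  have hmem : (∑ l : Fin k, ∑ v ∈ (P l).V.filter (fun v => v.2 = j), s l v.1) /
        ((∑ l : Fin k, ((P l).V.filter (fun v => v.2 = j)).card : ℕ) : ℝ) ∈
      {r : ℝ | ∃ a b : Fin k → ℕ, (∀ l, 1 ≤ a l ∧ a l ≤ b l ∧ b l ≤ m l) ∧
        r = (∑ l : Fin k, ∑ i ∈ Finset.Icc (a l) (b l), s l i) /
            (∑ l : Fin k, ((Finset.Icc (a l) (b l)).card : ℝ))} := by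
    refine ⟨a, b, fun l => ⟨ha l, hab l, hbm l⟩, ?_⟩
    congr 1
    · exact Finset.sum_congr rfl (fun l _ => hsum l)
    · push_cast
      exact Finset.sum_congr rfl (fun l _ => by rw [hcard l])
  refine ⟨?_, csInf_le (finite_S k m s).bddBelow hmem,
    le_csSup (finite_S k m s).bddAbove hmem⟩
  calc k = ∑ _l : Fin k, 1 := by simp
    _ ≤ ∑ l : Fin k, ((P l).V.filter (fun v => v.2 = j)).card :=
      Finset.sum_le_sum (fun l _ => by
        rw [hcard l, Nat.card_Icc]
        have := hab l
        omega)
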